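/- For all integers n and r with n ≥ r + 1 > 0, (r+1)·w̃_{n,r+1} = ∑_{j=r}^{n−1} C(n,j)·w_{n−j}·(w̃_{j,r} − (r+1)·w̃_{j,r+1}). -/

import Mathlib

/-- Stirling numbers of the second kind. -/
def stirling2 : ℕ → ℕ → ℕ
  | 0, 0 => 1
  | 0, _ + 1 => 0
  | _ + 1, 0 => 0
  | n + 1, k + 1 => (k + 1) * stirling2 n (k + 1) + stirling2 n k

/-- Derangement numbers `d_n = n! ∑_{i=0}^n (-1)^i / i!`. -/
def derang (n : ℕ) : ℚ :=
  (n.factorial : ℚ) * ∑ i ∈ Finset.range (n + 1), (-1 : ℚ) ^ i / (i.factorial : ℚ)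

/-- Partial derangement numbers `d_{n,r}`. -/
def pderang (n r : ℕ) : ℚ :=
  if r ≤ n then (n.choose r : ℚ) * derang (n - r) else 0

/-- Partial deranged Bell numbers `w̃_{n,r}`. -/
def pdb (n r : ℕ) : ℚ :=
  ∑ k ∈ Finset.range (n + 1), (stirling2 n k : ℚ) * pderang k r

/-- Ordered Bell numbers `w_n = ∑_{k=0}^n {n brace k} k!`. -/
def ordBell (n : ℕ) : ℚ :=
  ∑ k ∈ Finset.range (n + 1), (stirling2 n k : ℚ) * (k.factorial : ℚ)

open Finset


lemma stirling2_succ_zero (n : ℕ) : stirling2 (n+1) 0 = 0 := rfl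
lemma stirling2_zero_zero : stirling2 0 0 = 1 := rfl
lemma stirling2_succ_succ (n k : ℕ) :
    stirling2 (n+1) (k+1) = (k+1) * stirling2 n (k+1) + stirling2 n k := rfl

lemma stirling2_eq_zero {n k : ℕ} (h : n < k) : stirling2 n k = 0 := by
  induction n generalizing k with
  | zero => obtain ⟨k, rfl⟩ := Nat.exists_eq_add_of_lt h; rfl
  | succ n ih =>
    obtain ⟨m, rfl⟩ : ∃ m, k = m + 1 := ⟨k - 1, by omega⟩
    rw [stirling2_succ_succ, ih (by omega), ih (by omega)]
    simp

lemma stirling2_zero_add_one (n : ℕ) : stirling2 n 0 + stirling2 n 1 = 1 := by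
  induction n with
  | zero => rfl
  | succ n ih => rw [stirling2_succ_zero, stirling2_succ_succ]; simp at ih ⊢; omega

lemma conv_succ (f g : ℕ → ℕ) (n : ℕ) :
    ∑ m ∈ range (n+2), (n+1).choose m * f m * g (n+1-m)
      = ∑ m ∈ range (n+1), n.choose m * f m * g (n+1-m)
        + ∑ m ∈ range (n+1), n.choose m * f (m+1) * g (n-m) := by
  rw [Finset.sum_range_succ' (fun m => (n+1).choose m * f m * g (n+1-m))]
  have : ∀ m ∈ range (n+1), (n+1).choose (m+1) * f (m+1) * g (n+1-(m+1))
      = n.choose m * f (m+1) * g (n-m) + n.choose (m+1) * f (m+1) * g (n-m) := by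
    intro m hm
    rw [Nat.choose_succ_succ]
    have : n+1-(m+1) = n - m := by omega
    rw [this]; ring
  rw [Finset.sum_congr rfl this, Finset.sum_add_distrib]
  have h2 : ∑ m ∈ range (n+1), n.choose m * f m * g (n+1-m)
      = ∑ m ∈ range n, n.choose (m+1) * f (m+1) * g (n-m) + n.choose 0 * f 0 * g (n+1) := by
    rw [Finset.sum_range_succ' (fun m => n.choose m * f m * g (n+1-m))]
    congr 1
    exact Finset.sum_congr rfl fun m hm => by
      have : n+1-(m+1) = n - m := by omega
      rw [this]
  have h3 : ∑ m ∈ range (n+1), n.choose (m+1) * f (m+1) * g (n-m)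
      = ∑ m ∈ range n, n.choose (m+1) * f (m+1) * g (n-m) := by
    rw [Finset.sum_range_succ, Nat.choose_succ_self, zero_mul, zero_mul, add_zero]
  rw [h2, h3]
  simp only [Nat.sub_zero, Nat.choose_zero_right]
  ring

lemma stirling_conv (n : ℕ) : ∀ a b : ℕ,
    ∑ m ∈ range (n+1), n.choose m * stirling2 m a * stirling2 (n-m) b
      = (a+b).choose a * stirling2 n (a+b) := by
  induction n with
  | zero =>
    intro a b
    simp only [range_one, sum_singleton, Nat.choose_zero_right, one_mul, Nat.zero_sub]
    match a, b with
    | 0, 0 => rfl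
    | 0, b+1 => simp [stirling2_eq_zero]
    | a+1, b => simp [show (0:ℕ) < a+1+b by omega, stirling2_eq_zero, Nat.lt_irrefl]
  | succ n ih =>
    intro a b
    match a, b with
    | a, 0 =>
      simp only [Nat.add_zero, Nat.choose_self, one_mul]
      rw [Finset.sum_range_succ]
      have hz : ∀ m ∈ range (n+1), (n+1).choose m * stirling2 m a * stirling2 (n+1-m) 0 = 0 := by
        intro m hm
        simp only [mem_range] at hm
        have : n+1-m = (n-m)+1 := by omega
        rw [this, stirling2_succ_zero, Nat.mul_zero]
      rw [Finset.sum_eq_zero hz, zero_add, Nat.choose_self, Nat.sub_self, one_mul,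
        stirling2_zero_zero, Nat.mul_one]
    | 0, b+1 =>
      rw [Nat.zero_add, Nat.choose_zero_right, one_mul]
      rw [Finset.sum_range_succ' (fun m => (n+1).choose m * stirling2 m 0 * stirling2 (n+1-m) (b+1))]
      have hz : ∀ m ∈ range (n+1),
          (n+1).choose (m+1) * stirling2 (m+1) 0 * stirling2 (n+1-(m+1)) (b+1) = 0 := by
        intro m hm
        rw [stirling2_succ_zero, Nat.mul_zero, Nat.zero_mul]
      rw [Finset.sum_eq_zero hz, zero_add, Nat.choose_zero_right, stirling2_zero_zero]
      simp
    | a+1, b+1 =>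
      rw [conv_succ (fun m => stirling2 m (a+1)) (fun m => stirling2 m (b+1)) n]
      have e1 : ∑ m ∈ range (n+1), n.choose m * stirling2 m (a+1) * stirling2 (n+1-m) (b+1)
          = (b+1) * ((a+1+(b+1)).choose (a+1) * stirling2 n (a+1+(b+1)))
            + (a+1+b).choose (a+1) * stirling2 n (a+1+b) := by
        have : ∀ m ∈ range (n+1), n.choose m * stirling2 m (a+1) * stirling2 (n+1-m) (b+1)
            = (b+1) * (n.choose m * stirling2 m (a+1) * stirling2 (n-m) (b+1))
              + n.choose m * stirling2 m (a+1) * stirling2 (n-m) b := by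
          intro m hm
          simp only [mem_range] at hm
          have h' : n+1-m = (n-m)+1 := by omega
          rw [h', stirling2_succ_succ]; ring
        rw [Finset.sum_congr rfl this, Finset.sum_add_distrib, ← Finset.mul_sum, ih (a+1) (b+1),
          ih (a+1) b]
      have e2 : ∑ m ∈ range (n+1), n.choose m * stirling2 (m+1) (a+1) * stirling2 (n-m) (b+1)
          = (a+1) * ((a+1+(b+1)).choose (a+1) * stirling2 n (a+1+(b+1)))
            + (a+(b+1)).choose a * stirling2 n (a+(b+1)) := by
        have : ∀ m ∈ range (n+1), n.choose m * stirling2 (m+1) (a+1) * stirling2 (n-m) (b+1)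
            = (a+1) * (n.choose m * stirling2 m (a+1) * stirling2 (n-m) (b+1))
              + n.choose m * stirling2 m a * stirling2 (n-m) (b+1) := by
          intro m hm
          rw [stirling2_succ_succ]; ring
        rw [Finset.sum_congr rfl this, Finset.sum_add_distrib, ← Finset.mul_sum, ih (a+1) (b+1),
          ih a (b+1)]
      rw [e1, e2]
      have hc : (a+1+b).choose (a+1) + (a+(b+1)).choose a = (a+1+(b+1)).choose (a+1) := by
        have h1 : a+1+b = a+(b+1) := by omega
        have h2 : a+1+(b+1) = (a+(b+1))+1 := by omega
        rw [h1, h2, Nat.choose_succ_succ']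
        omega
      have heq : a+1+b = a+(b+1) := by omega
      have hs : stirling2 (n+1) (a+1+(b+1)) =
          (a+1+(b+1)) * stirling2 n (a+1+(b+1)) + stirling2 n (a+(b+1)) := by
        have : a+1+(b+1) = (a+(b+1))+1 := by omega
        rw [this, stirling2_succ_succ]
      rw [hs, heq, ← hc]
      ring

lemma sum_choose_stirling (n k : ℕ) :
    ∑ j ∈ range (n+1), n.choose j * stirling2 j k
      = stirling2 n k + (k+1) * stirling2 n (k+1) := by
  have h0 := stirling_conv n k 0
  have h1 := stirling_conv n k 1
  have hsplit : ∑ j ∈ range (n+1), n.choose j * stirling2 j k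
      = ∑ j ∈ range (n+1), n.choose j * stirling2 j k * stirling2 (n-j) 0
        + ∑ j ∈ range (n+1), n.choose j * stirling2 j k * stirling2 (n-j) 1 := by
    rw [← Finset.sum_add_distrib]
    refine Finset.sum_congr rfl fun j hj => ?_
    rw [← Nat.mul_add, stirling2_zero_add_one, Nat.mul_one]
  rw [hsplit, h0, h1, Nat.add_zero, Nat.choose_self, one_mul, Nat.choose_succ_self_right]

lemma sum_choose_filtered (c : ℕ → ℚ) (n : ℕ) :
    ∑ j ∈ range (n+1), (n.choose j : ℚ) * (∑ k ∈ range (j+1), (stirling2 j k : ℚ) * c k)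
      = ∑ k ∈ range (n+1), ((stirling2 n k : ℚ) + ((k:ℚ)+1) * (stirling2 n (k+1) : ℚ)) * c k := by
  have hext : ∀ j ∈ range (n+1),
      (n.choose j : ℚ) * (∑ k ∈ range (j+1), (stirling2 j k : ℚ) * c k)
        = ∑ k ∈ range (n+1), (n.choose j : ℚ) * ((stirling2 j k : ℚ) * c k) := by
    intro j hj
    simp only [mem_range] at hj
    rw [Finset.mul_sum]
    refine Finset.sum_subset (fun x hx => by simp only [mem_range] at hx ⊢; omega) ?_
    intro k hk hk2
    simp only [mem_range] at hk hk2
    rw [stirling2_eq_zero (by omega)]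
    simp
  rw [Finset.sum_congr rfl hext, Finset.sum_comm]
  refine Finset.sum_congr rfl fun k hk => ?_
  have : ∑ j ∈ range (n+1), (n.choose j : ℚ) * ((stirling2 j k : ℚ) * c k)
      = ((∑ j ∈ range (n+1), n.choose j * stirling2 j k : ℕ) : ℚ) * c k := by
    push_cast
    rw [Finset.sum_mul]
    refine Finset.sum_congr rfl fun j hj => by ring
  rw [this, sum_choose_stirling]
  push_cast
  ring

lemma pderang_eq_zero {n r : ℕ} (h : n < r) : pderang n r = 0 := if_neg (by omega)

lemma succ_mul_pderang (k r : ℕ) :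
    ((k:ℚ)+1) * pderang k r = ((r:ℚ)+1) * pderang (k+1) (r+1) := by
  unfold pderang
  by_cases h : r ≤ k
  · rw [if_pos h, if_pos (by omega)]
    have hc : (k+1) * k.choose r = (k+1).choose (r+1) * (r+1) := Nat.add_one_mul_choose_eq k r
    have hs : k + 1 - (r+1) = k - r := by omega
    rw [hs]
    have := congrArg (fun x : ℕ => (x : ℚ)) hc
    push_cast at this ⊢
    linear_combination derang (k - r) * this
  · rw [if_neg h, if_neg (by omega), mul_zero, mul_zero]

lemma pdb_eq_zero {n r : ℕ} (h : n < r) : pdb n r = 0 := by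
  unfold pdb
  refine Finset.sum_eq_zero fun k hk => ?_
  simp only [mem_range] at hk
  rw [pderang_eq_zero (by omega), mul_zero]

lemma sum_choose_pdb (n r : ℕ) :
    ∑ j ∈ range (n+1), (n.choose j : ℚ) * pdb j r
      = pdb n r + ((r:ℚ)+1) * pdb n (r+1) := by
  unfold pdb
  rw [sum_choose_filtered (fun k => pderang k r) n]
  have hsplit : ∀ k ∈ range (n+1),
      ((stirling2 n k : ℚ) + ((k:ℚ)+1) * (stirling2 n (k+1) : ℚ)) * pderang k r
        = (stirling2 n k : ℚ) * pderang k r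
          + (stirling2 n (k+1) : ℚ) * (((r:ℚ)+1) * pderang (k+1) (r+1)) := by
    intro k hk
    rw [← succ_mul_pderang]
    ring
  rw [Finset.sum_congr rfl hsplit, Finset.sum_add_distrib]
  congr 1
  rw [Finset.sum_range_succ' (fun m => (stirling2 n m : ℚ) * pderang m (r+1))]
  rw [pderang_eq_zero (by omega : (0:ℕ) < r+1), mul_zero, add_zero, Finset.mul_sum]
  rw [Finset.sum_range_succ (fun k => (stirling2 n (k+1) : ℚ) *
    (((r:ℚ)+1) * pderang (k+1) (r+1)))]
  rw [stirling2_eq_zero (Nat.lt_succ_self n)]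
  push_cast
  rw [zero_mul, add_zero]
  exact Finset.sum_congr rfl fun k hk => by ring

lemma sum_choose_ordBell (n : ℕ) :
    ∑ j ∈ range (n+1), (n.choose j : ℚ) * ordBell j
      = 2 * ordBell n - (if n = 0 then 1 else 0) := by
  unfold ordBell
  rw [sum_choose_filtered (fun k => (k.factorial : ℚ)) n]
  have hsplit : ∀ k ∈ range (n+1),
      ((stirling2 n k : ℚ) + ((k:ℚ)+1) * (stirling2 n (k+1) : ℚ)) * (k.factorial : ℚ)
        = (stirling2 n k : ℚ) * (k.factorial : ℚ)
          + (stirling2 n (k+1) : ℚ) * ((k+1).factorial : ℚ) := by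
    intro k hk
    rw [Nat.factorial_succ]
    push_cast
    ring
  rw [Finset.sum_congr rfl hsplit, Finset.sum_add_distrib]
  have h2 : ∑ k ∈ range (n+1), (stirling2 n (k+1) : ℚ) * ((k+1).factorial : ℚ)
      = ∑ k ∈ range (n+1), (stirling2 n k : ℚ) * (k.factorial : ℚ)
        - (if n = 0 then 1 else 0) := by
    rw [Finset.sum_range_succ' (fun m => (stirling2 n m : ℚ) * (m.factorial : ℚ))]
    rw [Finset.sum_range_succ (fun k => (stirling2 n (k+1) : ℚ) * ((k+1).factorial : ℚ))]
    rw [stirling2_eq_zero (Nat.lt_succ_self n)]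
    have : (stirling2 n 0 : ℚ) = if n = 0 then 1 else 0 := by
      cases n with
      | zero => simp [stirling2_zero_zero]
      | succ m => simp [stirling2_succ_zero]
    rw [this]
    simp
  rw [h2]
  ring

noncomputable def egf (a : ℕ → ℚ) : PowerSeries ℚ :=
  PowerSeries.mk fun n => a n / (n.factorial : ℚ)

lemma coeff_egf (a : ℕ → ℚ) (n : ℕ) :
    PowerSeries.coeff n (egf a) = a n / (n.factorial : ℚ) :=
  PowerSeries.coeff_mk n _

lemma egf_mul (a b : ℕ → ℚ) :
    egf a * egf b
      = egf (fun n => ∑ j ∈ range (n+1), (n.choose j : ℚ) * a j * b (n-j)) := by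
  ext n
  rw [PowerSeries.coeff_mul, coeff_egf, Finset.Nat.sum_antidiagonal_eq_sum_range_succ_mk,
    Finset.sum_div]
  refine Finset.sum_congr rfl fun j hj => ?_
  simp only [mem_range] at hj
  rw [coeff_egf, coeff_egf, Nat.cast_choose ℚ (by omega : j ≤ n)]
  have h1 : (j.factorial : ℚ) ≠ 0 := Nat.cast_ne_zero.mpr j.factorial_ne_zero
  have h2 : ((n-j).factorial : ℚ) ≠ 0 := Nat.cast_ne_zero.mpr (n-j).factorial_ne_zero
  have h3 : (n.factorial : ℚ) ≠ 0 := Nat.cast_ne_zero.mpr n.factorial_ne_zero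
  field_simp

lemma key (r n : ℕ) :
    ∑ j ∈ range (n+1), (n.choose j : ℚ) * (pdb j r - ((r:ℚ)+1) * pdb j (r+1)) * ordBell (n-j)
      = pdb n r := by
  have hA : egf (fun m => pdb m r) * egf (fun _ => (1:ℚ))
      = egf (fun m => pdb m r) + PowerSeries.C ((r:ℚ)+1) * egf (fun m => pdb m (r+1)) := by
    rw [egf_mul]
    ext m
    rw [coeff_egf, map_add, coeff_egf, PowerSeries.coeff_C_mul, coeff_egf]
    have : ∑ j ∈ range (m+1), (m.choose j : ℚ) * pdb j r * (fun _ => (1:ℚ)) (m-j)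
        = pdb m r + ((r:ℚ)+1) * pdb m (r+1) := by
      simp only [mul_one]
      exact sum_choose_pdb m r
    rw [this]
    ring
  have hO : egf ordBell * egf (fun _ => (1:ℚ)) = egf ordBell + egf ordBell - 1 := by
    rw [egf_mul]
    ext m
    rw [map_sub, map_add, coeff_egf, coeff_egf, PowerSeries.coeff_one]
    have : ∑ j ∈ range (m+1), (m.choose j : ℚ) * ordBell j * (fun _ => (1:ℚ)) (m-j)
        = 2 * ordBell m - (if m = 0 then 1 else 0) := by
      simp only [mul_one]
      exact sum_choose_ordBell m
    rw [this]
    split_ifs with h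
    · subst h; simp [Nat.factorial]; ring
    · ring
  have hU : egf (fun m => pdb m r - ((r:ℚ)+1) * pdb m (r+1))
      = egf (fun m => pdb m r) - PowerSeries.C ((r:ℚ)+1) * egf (fun m => pdb m (r+1)) := by
    ext m
    rw [coeff_egf, map_sub, coeff_egf, PowerSeries.coeff_C_mul, coeff_egf]
    ring
  have hmain : egf (fun m => pdb m r - ((r:ℚ)+1) * pdb m (r+1)) * egf ordBell
      = egf (fun m => pdb m r) := by
    rw [hU]
    have h1 : PowerSeries.C ((r:ℚ)+1) * egf (fun m => pdb m (r+1))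
        = egf (fun m => pdb m r) * egf (fun _ => (1:ℚ)) - egf (fun m => pdb m r) := by
      rw [hA]; ring
    rw [h1]
    calc (egf (fun m => pdb m r)
          - (egf (fun m => pdb m r) * egf (fun _ => (1:ℚ)) - egf (fun m => pdb m r)))
            * egf ordBell
        = egf (fun m => pdb m r)
            * (egf ordBell + egf ordBell - egf ordBell * egf (fun _ => (1:ℚ))) := by ring
      _ = egf (fun m => pdb m r) := by rw [hO]; ring
  rw [egf_mul] at hmain
  have := congrArg (PowerSeries.coeff n) hmain
  rw [coeff_egf, coeff_egf] at this
  have h3 : (n.factorial : ℚ) ≠ 0 := Nat.cast_ne_zero.mpr n.factorial_ne_zero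
  field_simp at this
  exact this

/-- For `n ≥ r + 1 > 0`,
`(r+1) w̃_{n,r+1} = ∑_{j=r}^{n-1} C(n,j) w_{n-j} (w̃_{j,r} - (r+1) w̃_{j,r+1})`. -/
theorem succ_mul_pdb_succ_eq_sum (n r : ℕ) (h : r + 1 ≤ n) :
    (r + 1 : ℚ) * pdb n (r + 1) =
      ∑ j ∈ Finset.Icc r (n - 1), (n.choose j : ℚ) * ordBell (n - j) *
        (pdb j r - (r + 1 : ℚ) * pdb j (r + 1)) := by
  have hkey := key r n
  rw [Finset.sum_range_succ, Nat.choose_self, Nat.sub_self] at hkey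
  have h0 : ordBell 0 = 1 := by
    unfold ordBell
    simp [stirling2_zero_zero]
  rw [h0] at hkey
  push_cast at hkey
  have hs : ∑ j ∈ Finset.Icc r (n-1), (n.choose j : ℚ) * ordBell (n-j) *
        (pdb j r - ((r:ℚ)+1) * pdb j (r+1))
      = ∑ j ∈ range n, (n.choose j : ℚ) * (pdb j r - ((r:ℚ)+1) * pdb j (r+1)) * ordBell (n-j) := by
    rw [Finset.sum_congr rfl (fun j hj => by ring :
      ∀ j ∈ Finset.Icc r (n-1), (n.choose j : ℚ) * ordBell (n-j) *
        (pdb j r - ((r:ℚ)+1) * pdb j (r+1))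
        = (n.choose j : ℚ) * (pdb j r - ((r:ℚ)+1) * pdb j (r+1)) * ordBell (n-j))]
    refine Finset.sum_subset (fun x hx => ?_) (fun x hx hx2 => ?_)
    · simp only [Finset.mem_Icc, mem_range] at hx ⊢
      omega
    · simp only [Finset.mem_Icc, mem_range] at hx hx2
      have hxr : x < r := by omega
      rw [pdb_eq_zero hxr, pdb_eq_zero (by omega : x < r+1)]
      ring
  rw [hs]
  linarith [hkey]
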